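/- If an optimal control problem has the L^r turnpike property with comparison function α₁ ∈ 𝒦_∞ and constant C, then it has the pathwise-in-probability turnpike property with constant C and comparison function α₂(ε) := α₁(ε^{r+1}): i.e., for any trajectory with J_N(X_0,U) ≤ δ + N·ℓ(X^s,U^s), and any ε > 0, the number of times k with ℙ(‖X(k) − X^s(k)‖ ≤ ε) ≥ 1 − ε is at least N − (δ + C)/α₁(ε^{r+1}). -/

import Mathlib

open MeasureTheory
open scoped Classical

noncomputable section

/-- Class `𝒦_∞` of comparison functions. -/
def IsKInfty (α : ℝ → ℝ) : Prop :=
  ContinuousOn α (Set.Ici 0) ∧ StrictMonoOn α (Set.Ici 0) ∧ α 0 = 0 ∧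
    ∀ c : ℝ, ∃ x, 0 ≤ x ∧ c ≤ α x

/-- `L^r` turnpike implies pathwise-in-probability turnpike with `α₂(ε) = α₁(ε^{r+1})`. -/
theorem Lr_turnpike_implies_pathwise_in_probability_turnpike
    {Ω 𝒳 : Type*} [MeasurableSpace Ω] [NormedAddCommGroup 𝒳]
    (P : Measure Ω) [IsProbabilityMeasure P]
    (r : ℕ) (hr : 1 ≤ r)
    (α₁ : ℝ → ℝ) (hα₁ : IsKInfty α₁)
    (C δ : ℝ) (hC : 0 < C) (hδ : 0 < δ)
    (N : ℕ)
    (X Xs : ℕ → Ω → 𝒳)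
    (hInt : ∀ k, Integrable (fun ω => ‖X k ω - Xs k ω‖ ^ r) P)
    -- the `L^r` turnpike counting estimate along the trajectory:
    (hLr : ∀ η > (0 : ℝ),
      (N : ℝ) - (δ + C) / α₁ η
        ≤ ((Finset.range N).filter
            (fun k => (∫ ω, ‖X k ω - Xs k ω‖ ^ r ∂P) ≤ η)).card) :
    ∀ ε > (0 : ℝ),
      (N : ℝ) - (δ + C) / α₁ (ε ^ (r + 1))
        ≤ ((Finset.range N).filter
            (fun k => ENNReal.ofReal (1 - ε) ≤ P {ω | ‖X k ω - Xs k ω‖ ≤ ε})).card := by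
  intro ε hε
  have key := hLr (ε ^ (r + 1)) (pow_pos hε _)
  refine key.trans ?_
  have hsub : ((Finset.range N).filter
        (fun k => (∫ ω, ‖X k ω - Xs k ω‖ ^ r ∂P) ≤ ε ^ (r + 1))) ⊆
      ((Finset.range N).filter
        (fun k => ENNReal.ofReal (1 - ε) ≤ P {ω | ‖X k ω - Xs k ω‖ ≤ ε})) := by
    intro k hkmem
    simp only [Finset.mem_filter] at hkmem ⊢
    obtain ⟨hkN, hk⟩ := hkmem
    refine ⟨hkN, ?_⟩
    -- trivial if ε ≥ 1
    rcases le_or_gt 1 ε with h1 | h1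
    · have : (1 - ε : ℝ) ≤ 0 := by linarith
      rw [ENNReal.ofReal_eq_zero.mpr this]
      exact zero_le
    set f : Ω → ℝ := fun ω => ‖X k ω - Xs k ω‖
    set g : Ω → ℝ := fun ω => ‖X k ω - Xs k ω‖ ^ r
    have hgint : Integrable g P := hInt k
    have hgnn : 0 ≤ᵐ[P] g := Filter.Eventually.of_forall fun ω => by positivity
    -- Markov: ε^r * P{ε^r ≤ g}.toReal ≤ ∫ g ≤ ε^(r+1)
    have hmarkov := mul_meas_ge_le_integral_of_nonneg hgnn hgint (ε ^ r)
    have hbound : (P {ω | ε ^ r ≤ g ω}).toReal ≤ ε := by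
      have hεr : (0:ℝ) < ε ^ r := pow_pos hε r
      have h2 : ε ^ r * (P {ω | ε ^ r ≤ g ω}).toReal ≤ ε ^ r * ε := by
        calc ε ^ r * (P {ω | ε ^ r ≤ g ω}).toReal ≤ ∫ ω, g ω ∂P := hmarkov
          _ ≤ ε ^ (r + 1) := hk
          _ = ε ^ r * ε := by ring
      exact le_of_mul_le_mul_left h2 hεr
    -- {f > ε} ⊆ {ε^r ≤ g}
    have hsubset : {ω | ε < f ω} ⊆ {ω | ε ^ r ≤ g ω} := by
      intro ω hω
      simp only [Set.mem_setOf_eq] at hω ⊢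
      exact pow_le_pow_left₀ hε.le hω.le r
    have hfin : P {ω | ε < f ω} ≠ ⊤ := (measure_lt_top P _).ne
    have hb : P {ω | ε < f ω} ≤ ENNReal.ofReal ε := by
      rw [ENNReal.le_ofReal_iff_toReal_le hfin hε.le]
      calc (P {ω | ε < f ω}).toReal ≤ (P {ω | ε ^ r ≤ g ω}).toReal :=
            ENNReal.toReal_mono (measure_lt_top P _).ne (measure_mono hsubset)
        _ ≤ ε := hbound
    -- 1 ≤ P{f ≤ ε} + P{f > ε}
    have hcover : (1 : ENNReal) ≤ P {ω | f ω ≤ ε} + P {ω | ε < f ω} := by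
      have : (Set.univ : Set Ω) ⊆ {ω | f ω ≤ ε} ∪ {ω | ε < f ω} := by
        intro ω _
        rcases le_or_gt (f ω) ε with h | h
        · exact Or.inl h
        · exact Or.inr h
      calc (1 : ENNReal) = P Set.univ := (measure_univ).symm
        _ ≤ P ({ω | f ω ≤ ε} ∪ {ω | ε < f ω}) := measure_mono this
        _ ≤ _ := measure_union_le _ _
    have hsum : ENNReal.ofReal (1 - ε) + ENNReal.ofReal ε ≤
        P {ω | f ω ≤ ε} + ENNReal.ofReal ε := by
      have : ENNReal.ofReal (1 - ε) + ENNReal.ofReal ε = 1 := by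
        rw [← ENNReal.ofReal_add (by linarith) hε.le]
        norm_num
      rw [this]
      calc (1 : ENNReal) ≤ P {ω | f ω ≤ ε} + P {ω | ε < f ω} := hcover
        _ ≤ P {ω | f ω ≤ ε} + ENNReal.ofReal ε := add_le_add_right hb _
    exact (ENNReal.add_le_add_iff_right ENNReal.ofReal_ne_top).mp hsum
  exact Nat.cast_le.mpr (Finset.card_le_card hsub)
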